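/- Single-round two-prover probability invariance: let U₁, U₂ be Clifford unitaries, |ψ⟩ a shared state, and for queries q₁, q₂ and q̃₁, q̃₂ define R_i := U_i (X_{q_i⊕q̃_i} ⊗ I) U_i†. If the answers are related by |ã_i⟩⟨ã_i| = R_i |a_i⟩⟨a_i| R_i†, then |⟨a₁,a₂| (U₁⊗U₂) |q₁⟩|q₂⟩|ψ⟩|² = |⟨ã₁,ã₂| (U₁⊗U₂) |q̃₁⟩|q̃₂⟩|ψ⟩|². -/

import Mathlib

open Matrix Kronecker

namespace PauliPaper

noncomputable section

def X : Matrix (Fin 2) (Fin 2) ℂ := !![0, 1; 1, 0]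
def Y : Matrix (Fin 2) (Fin 2) ℂ := !![0, -Complex.I; Complex.I, 0]
def Z : Matrix (Fin 2) (Fin 2) ℂ := !![1, 0; 0, -1]

def phases : Set ℂ := {1, Complex.I, -1, -Complex.I}

def PauliSet : Set (Matrix (Fin 2) (Fin 2) ℂ) := {1, X, Y, Z}

/-- Entrywise formula for the `n`-fold Kronecker (tensor) product of `2 × 2` matrices. -/
def tensorPauli {n : ℕ} (P : Fin n → Matrix (Fin 2) (Fin 2) ℂ) :
    Matrix (Fin n → Fin 2) (Fin n → Fin 2) ℂ :=
  Matrix.of fun a b => ∏ i, P i (a i) (b i)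

/-- The `n`-qubit Pauli group: phased tensor products of `I, X, Y, Z`. -/
def PauliGroup (n : ℕ) : Set (Matrix (Fin n → Fin 2) (Fin n → Fin 2) ℂ) :=
  { M | ∃ c ∈ phases, ∃ P : Fin n → Matrix (Fin 2) (Fin 2) ℂ,
      (∀ i, P i ∈ PauliSet) ∧ M = c • tensorPauli P }

/-- The `n`-qubit Clifford group: unitaries normalizing the Pauli group. -/
def Clifford (n : ℕ) : Set (Matrix (Fin n → Fin 2) (Fin n → Fin 2) ℂ) :=
  { U | U ∈ Matrix.unitaryGroup (Fin n → Fin 2) ℂ ∧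
      (fun P => U * P * Uᴴ) '' PauliGroup n = PauliGroup n }

/-- Standard basis vector indexed by `a`. -/
def ket {α : Type*} [DecidableEq α] (a : α) : α → ℂ := fun i => if i = a then 1 else 0

/-- Rank-one projector `|a⟩⟨a|` onto the standard basis vector indexed by `a`. -/
def ketbra {α : Type*} [DecidableEq α] (a : α) : Matrix α α ℂ :=
  Matrix.of fun i j => if i = a ∧ j = a then 1 else 0

/-- `X_{x ⊕ y}`: tensor `X` where the bit-strings differ, identity elsewhere. -/
def XCorr {n : ℕ} (x y : Fin n → Fin 2) : Matrix (Fin n → Fin 2) (Fin n → Fin 2) ℂ :=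
  tensorPauli (fun i => if x i ≠ y i then X else 1)

def splitEquiv (n m : ℕ) : (Fin (n + m) → Fin 2) ≃ (Fin n → Fin 2) × (Fin m → Fin 2) :=
  (Equiv.arrowCongr finSumFinEquiv.symm (Equiv.refl _)).trans
    (Equiv.sumArrowEquivProdArrow _ _ _)

/-- Kronecker product of an `n`-qubit and an `m`-qubit operator as an `(n+m)`-qubit operator. -/
def kron {n m : ℕ} (M : Matrix (Fin n → Fin 2) (Fin n → Fin 2) ℂ)
    (N : Matrix (Fin m → Fin 2) (Fin m → Fin 2) ℂ) :
    Matrix (Fin (n + m) → Fin 2) (Fin (n + m) → Fin 2) ℂ :=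
  Matrix.of fun a b =>
    M (splitEquiv n m a).1 (splitEquiv n m b).1 * N (splitEquiv n m a).2 (splitEquiv n m b).2

/-- The initial pure state `|q₁⟩|q₂⟩|ψ⟩`: each prover `i` holds an `s`-qubit query
register storing `qᵢ` together with its `nᵢ`-qubit share of `ψ`. -/
def inState (s n₁ n₂ : ℕ) (q₁ q₂ : Fin s → Fin 2)
    (ψ : (Fin n₁ → Fin 2) × (Fin n₂ → Fin 2) → ℂ) :
    ((Fin s → Fin 2) × (Fin n₁ → Fin 2)) × ((Fin s → Fin 2) × (Fin n₂ → Fin 2)) → ℂ :=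
  fun p => (if p.1.1 = q₁ then 1 else 0) * (if p.2.1 = q₂ then 1 else 0) * ψ (p.1.2, p.2.2)


lemma X_apply (a b : Fin 2) : X a b = if a = b then 0 else 1 := by
  fin_cases a <;> fin_cases b <;> simp [X]

lemma fin2_ne {a b c : Fin 2} (h : b ≠ c) : (a = c) ↔ ¬ a = b := by
  fin_cases a <;> fin_cases b <;> fin_cases c <;> simp_all

lemma XCorr_apply_right {n : ℕ} (q qt x : Fin n → Fin 2) :
    XCorr q qt x qt = if x = q then 1 else 0 := by
  unfold XCorr tensorPauli
  have hfac : ∀ i, (if q i ≠ qt i then X else 1) (x i) (qt i)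
      = if x i = q i then 1 else 0 := by
    intro i
    by_cases h : q i = qt i
    · simp [h, Matrix.one_apply]
    · simp only [h, ne_eq, not_false_iff, if_true]
      rw [X_apply]
      by_cases hx : x i = q i
      · rw [if_pos hx, if_neg (fun hc => h (hx.symm.trans hc))]
      · rw [if_neg hx, if_pos ((fin2_ne h).mpr hx)]
  simp only [Matrix.of_apply, hfac]
  by_cases h : x = q
  · simp [h]
  · obtain ⟨i, hi⟩ := Function.ne_iff.mp h
    rw [if_neg h]
    exact Finset.prod_eq_zero (Finset.mem_univ i) (by simp [hi])

lemma XCorr_star {n : ℕ} (q qt : Fin n → Fin 2) (a b : Fin n → Fin 2) :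
    star (XCorr q qt a b) = XCorr q qt b a := by
  unfold XCorr tensorPauli
  simp only [Matrix.of_apply, star_prod]
  refine Finset.prod_congr rfl fun i _ => ?_
  by_cases h : q i = qt i
  · simp [h, Matrix.one_apply, apply_ite (star : ℂ → ℂ), eq_comm]
  · simp only [h, ne_eq, not_false_iff, if_true]
    rw [X_apply, X_apply, apply_ite (star : ℂ → ℂ), star_zero, star_one]
    simp [eq_comm]

lemma conj_ketbra {α : Type*} [Fintype α] [DecidableEq α] (R : Matrix α α ℂ) (a i j : α) :
    (R * ketbra a * Rᴴ) i j = R i a * star (R j a) := by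
  simp only [Matrix.mul_apply, ketbra, Matrix.conjTranspose_apply, Matrix.of_apply]
  simp [ite_and, mul_ite, ite_mul, Finset.sum_ite_eq']

lemma unitary_of_reindex {m n : Type*} [Fintype m] [DecidableEq m] [Fintype n] [DecidableEq n]
    (e : m ≃ n) (U : Matrix m m ℂ)
    (h : Matrix.reindex e e U ∈ Matrix.unitaryGroup n ℂ) : Uᴴ * U = 1 := by
  have h1 : star (Matrix.reindex e e U) * Matrix.reindex e e U = 1 := h.1
  ext i j
  have h2 := congrFun (congrFun h1 (e i)) (e j)
  simp only [Matrix.star_eq_conjTranspose, Matrix.reindex_apply, Matrix.conjTranspose_submatrix,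
    Matrix.submatrix_mul_equiv, Matrix.submatrix_apply, Equiv.symm_apply_apply] at h2
  simpa [Matrix.one_apply, EmbeddingLike.apply_eq_iff_eq] using h2

lemma XCorr_kron_herm {n m : ℕ} (q qt : Fin n → Fin 2) :
    (XCorr q qt ⊗ₖ (1 : Matrix (Fin m → Fin 2) (Fin m → Fin 2) ℂ))ᴴ
      = XCorr q qt ⊗ₖ (1 : Matrix (Fin m → Fin 2) (Fin m → Fin 2) ℂ) := by
  ext ⟨i1, i2⟩ ⟨j1, j2⟩
  simp only [Matrix.conjTranspose_apply, Matrix.kroneckerMap_apply, star_mul']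
  rw [XCorr_star]
  congr 1
  simp [Matrix.one_apply, apply_ite (star : ℂ → ℂ), eq_comm]

lemma pauli_column {α : Type*} [Fintype α] [DecidableEq α] (R : Matrix α α ℂ) (a at' : α)
    (h : ketbra at' = R * ketbra a * Rᴴ) :
    ‖R at' a‖ = 1 ∧ ∀ i, i ≠ at' → R i a = 0 := by
  have key : ∀ i j, (if i = at' ∧ j = at' then (1 : ℂ) else 0) = R i a * star (R j a) := by
    intro i j
    have h2 := congrFun (congrFun h i) j
    rwa [conj_ketbra] at h2
  have h1 : R at' a * star (R at' a) = 1 := by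
    have := key at' at'
    simpa using this.symm
  have habs : ‖R at' a‖ = 1 := by
    have h3 := congrArg (‖·‖) h1
    simp only [norm_mul, norm_one] at h3
    have h4 : ‖star (R at' a)‖ = ‖R at' a‖ := by
      rw [Complex.star_def, Complex.norm_conj]
    rw [h4, ← sq] at h3
    nlinarith [norm_nonneg (R at' a)]
  refine ⟨habs, fun i hi => ?_⟩
  have h5 := key i at'
  rw [if_neg (by tauto)] at h5
  have h6 : star (R at' a) ≠ 0 := by
    intro hc
    rw [Complex.star_def] at hc
    have : R at' a = 0 := by simpa using congrArg (starRingEnd ℂ) hc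
    rw [this] at habs; simp at habs
  exact (mul_eq_zero.mp h5.symm).resolve_right h6

lemma key_state (s n₁ n₂ : ℕ) (q₁ q₂ qt₁ qt₂ : Fin s → Fin 2)
    (ψ : (Fin n₁ → Fin 2) × (Fin n₂ → Fin 2) → ℂ) :
    ((XCorr q₁ qt₁ ⊗ₖ (1 : Matrix (Fin n₁ → Fin 2) (Fin n₁ → Fin 2) ℂ)) ⊗ₖ
        (XCorr q₂ qt₂ ⊗ₖ (1 : Matrix (Fin n₂ → Fin 2) (Fin n₂ → Fin 2) ℂ))).mulVec
        (inState s n₁ n₂ qt₁ qt₂ ψ)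
      = inState s n₁ n₂ q₁ q₂ ψ := by
  funext p
  obtain ⟨⟨x₁, y₁⟩, ⟨x₂, y₂⟩⟩ := p
  simp only [Matrix.mulVec, dotProduct, Matrix.kroneckerMap_apply, inState,
    Fintype.sum_prod_type, Matrix.one_apply]
  simp only [ite_mul, mul_ite, mul_zero, zero_mul, mul_one, one_mul,
    Finset.sum_ite_eq, Finset.sum_ite_eq', Finset.mem_univ, if_true]
  simp [XCorr_apply_right, ite_mul, zero_mul, mul_comm, mul_left_comm]

/-- Single-round two-prover probability invariance. -/
theorem single_round_probability_invariance (s n₁ n₂ : ℕ)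
    (U₁ : Matrix ((Fin s → Fin 2) × (Fin n₁ → Fin 2))
      ((Fin s → Fin 2) × (Fin n₁ → Fin 2)) ℂ)
    (U₂ : Matrix ((Fin s → Fin 2) × (Fin n₂ → Fin 2))
      ((Fin s → Fin 2) × (Fin n₂ → Fin 2)) ℂ)
    (hU₁ : Matrix.reindex (splitEquiv s n₁).symm (splitEquiv s n₁).symm U₁ ∈ Clifford (s + n₁))
    (hU₂ : Matrix.reindex (splitEquiv s n₂).symm (splitEquiv s n₂).symm U₂ ∈ Clifford (s + n₂))
    (ψ : (Fin n₁ → Fin 2) × (Fin n₂ → Fin 2) → ℂ)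
    (q₁ q₂ qt₁ qt₂ : Fin s → Fin 2)
    (R₁ : Matrix ((Fin s → Fin 2) × (Fin n₁ → Fin 2))
      ((Fin s → Fin 2) × (Fin n₁ → Fin 2)) ℂ)
    (hR₁ : R₁ = U₁ * (XCorr q₁ qt₁ ⊗ₖ (1 : Matrix (Fin n₁ → Fin 2) (Fin n₁ → Fin 2) ℂ)) * U₁ᴴ)
    (R₂ : Matrix ((Fin s → Fin 2) × (Fin n₂ → Fin 2))
      ((Fin s → Fin 2) × (Fin n₂ → Fin 2)) ℂ)
    (hR₂ : R₂ = U₂ * (XCorr q₂ qt₂ ⊗ₖ (1 : Matrix (Fin n₂ → Fin 2) (Fin n₂ → Fin 2) ℂ)) * U₂ᴴ)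
    (a₁ at₁ : (Fin s → Fin 2) × (Fin n₁ → Fin 2))
    (a₂ at₂ : (Fin s → Fin 2) × (Fin n₂ → Fin 2))
    (ha₁ : ketbra at₁ = R₁ * ketbra a₁ * R₁ᴴ)
    (ha₂ : ketbra at₂ = R₂ * ketbra a₂ * R₂ᴴ) :
    ‖((U₁ ⊗ₖ U₂).mulVec (inState s n₁ n₂ q₁ q₂ ψ)) (a₁, a₂)‖ ^ 2 =
      ‖((U₁ ⊗ₖ U₂).mulVec (inState s n₁ n₂ qt₁ qt₂ ψ)) (at₁, at₂)‖ ^ 2 := by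
  have hUU₁ : U₁ᴴ * U₁ = 1 := unitary_of_reindex _ _ hU₁.1
  have hUU₂ : U₂ᴴ * U₂ = 1 := unitary_of_reindex _ _ hU₂.1
  have hherm₁ : R₁ᴴ = R₁ := by
    rw [hR₁, Matrix.conjTranspose_mul, Matrix.conjTranspose_mul, Matrix.conjTranspose_conjTranspose,
      XCorr_kron_herm, Matrix.mul_assoc]
  have hherm₂ : R₂ᴴ = R₂ := by
    rw [hR₂, Matrix.conjTranspose_mul, Matrix.conjTranspose_mul, Matrix.conjTranspose_conjTranspose,
      XCorr_kron_herm, Matrix.mul_assoc]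
  obtain ⟨habs₁, hzero₁⟩ := pauli_column R₁ a₁ at₁ ha₁
  obtain ⟨habs₂, hzero₂⟩ := pauli_column R₂ a₂ at₂ ha₂
  -- row facts
  have hrow₁ : ∀ b, R₁ a₁ b = star (R₁ b a₁) := by
    intro b
    conv_lhs => rw [← hherm₁]
    rw [Matrix.conjTranspose_apply]
  have hrow₂ : ∀ b, R₂ a₂ b = star (R₂ b a₂) := by
    intro b
    conv_lhs => rw [← hherm₂]
    rw [Matrix.conjTranspose_apply]
  have hstep : (U₁ ⊗ₖ U₂) *
      ((XCorr q₁ qt₁ ⊗ₖ (1 : Matrix (Fin n₁ → Fin 2) (Fin n₁ → Fin 2) ℂ)) ⊗ₖ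
        (XCorr q₂ qt₂ ⊗ₖ (1 : Matrix (Fin n₂ → Fin 2) (Fin n₂ → Fin 2) ℂ)))
      = (R₁ ⊗ₖ R₂) * (U₁ ⊗ₖ U₂) := by
    rw [← Matrix.mul_kronecker_mul, ← Matrix.mul_kronecker_mul, hR₁, hR₂,
      Matrix.mul_assoc _ _ U₁, Matrix.mul_assoc _ _ U₂, hUU₁, hUU₂,
      Matrix.mul_one, Matrix.mul_one]
  have hvec : (U₁ ⊗ₖ U₂).mulVec (inState s n₁ n₂ q₁ q₂ ψ)
      = (R₁ ⊗ₖ R₂).mulVec ((U₁ ⊗ₖ U₂).mulVec (inState s n₁ n₂ qt₁ qt₂ ψ)) := by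
    rw [← key_state s n₁ n₂ q₁ q₂ qt₁ qt₂ ψ, Matrix.mulVec_mulVec, Matrix.mulVec_mulVec, hstep]
  set w := (U₁ ⊗ₖ U₂).mulVec (inState s n₁ n₂ qt₁ qt₂ ψ) with hw
  have hcollapse : ((R₁ ⊗ₖ R₂).mulVec w) (a₁, a₂)
      = R₁ a₁ at₁ * R₂ a₂ at₂ * w (at₁, at₂) := by
    rw [Matrix.mulVec, dotProduct]
    rw [Finset.sum_eq_single (at₁, at₂)]
    · simp [Matrix.kroneckerMap_apply]
    · rintro ⟨b₁, b₂⟩ - hb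
      have : b₁ ≠ at₁ ∨ b₂ ≠ at₂ := by
        by_contra hc
        push_neg at hc
        exact hb (Prod.ext hc.1 hc.2)
      rcases this with h | h
      · rw [Matrix.kroneckerMap_apply, hrow₁, hzero₁ _ h]; simp
      · rw [Matrix.kroneckerMap_apply, hrow₂, hzero₂ _ h]; simp
    · intro h; exact absurd (Finset.mem_univ _) h
  rw [hvec, hcollapse, norm_mul, norm_mul, hrow₁, hrow₂]
  simp only [Complex.star_def, Complex.norm_conj, habs₁, habs₂, one_mul]

end
end PauliPaper
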